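/- Let Γ be a finite negative definite tree with a vertex v, let Γ_i be a component of Γ∖v, and let v_i be the unique vertex of Γ_i adjacent to v. With a_{vw} = -det(-I)·(I^{-1})_{vw} for Γ and a_{v_i w, i} the analogous quantity for Γ_i, for every vertex w of Γ_i one has a_{vw} = a_{v_i w, i} · det(Γ ∖ v ∖ Γ_i), where det of a graph is the determinant of the negative of its intersection matrix and det(∅) = 1. -/

import Mathlib

open BigOperators Matrix

lemma posDef_submatrix' {n m : Type*} [Fintype n] [Fintype m] [DecidableEq n] [DecidableEq m]
    {M : Matrix n n ℝ} (hM : M.PosDef) (e : m → n) (he : Function.Injective e) :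
    (M.submatrix e e).PosDef := by
  exact hM.submatrix he

lemma unique_nbr' {V : Type*} [Fintype V] [DecidableEq V]
    (G : SimpleGraph V) (hG : G.IsTree)
    (v : V) (S : Finset V) (hvS : v ∉ S)
    (hconn : (G.induce (↑S : Set V)).Connected)
    (vi : V) (hvi : vi ∈ S) (hadj : G.Adj v vi)
    (s : V) (hs : s ∈ S) (hvs : G.Adj v s) : s = vi := by
  classical
  have hreach : ((G.induce (↑S : Set V))).Reachable ⟨vi, by simpa using hvi⟩ ⟨s, by simpa using hs⟩ :=
    hconn.preconnected _ _
  obtain ⟨p⟩ := hreach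
  let emb := SimpleGraph.Embedding.induce (G := G) (↑S : Set V)
  let q : G.Walk vi s := p.map emb.toHom
  have hsupp : ∀ x ∈ q.bypass.support, x ∈ S := by
    intro x hx
    have hx' := q.support_bypass_subset hx
    have : x ∈ (p.map emb.toHom).support := hx'
    rw [SimpleGraph.Walk.support_map] at this
    obtain ⟨y, _, rfl⟩ := List.mem_map.mp this
    exact y.2
  have hp1 : (SimpleGraph.Walk.cons hadj q.bypass).IsPath := by
    rw [SimpleGraph.Walk.cons_isPath_iff]
    exact ⟨q.bypass_isPath, fun h => hvS (hsupp v h)⟩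
  have hp2 : (SimpleGraph.Walk.cons hvs SimpleGraph.Walk.nil).IsPath := by
    simp [SimpleGraph.Walk.cons_isPath_iff, hvs.ne]
  obtain ⟨u, -, hu⟩ := hG.existsUnique_path v s
  have heq : SimpleGraph.Walk.cons hadj q.bypass = SimpleGraph.Walk.cons hvs SimpleGraph.Walk.nil := by
    rw [hu _ hp1, hu _ hp2]
  have hlen := congrArg SimpleGraph.Walk.length heq
  simp [SimpleGraph.Walk.length_cons] at hlen
  exact (SimpleGraph.Walk.Nil.eq hlen).symm

/-- The determinant of the negative of the principal submatrix of `I` on the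
vertex set `S` (with the convention `det ∅ = 1`). -/
def gdet {V : Type*} [Fintype V] [DecidableEq V] (I : Matrix V V ℤ) (S : Finset V) : ℤ :=
  Matrix.det (Matrix.of fun i j : {x : V // x ∈ S} => -I i.1 j.1)

theorem stmt14 (V : Type*) [Fintype V] [DecidableEq V]
    (G : SimpleGraph V) [DecidableRel G.Adj] (hG : G.IsTree)
    (I : Matrix V V ℤ)
    (hoff : ∀ u w : V, u ≠ w → I u w = if G.Adj u w then 1 else 0)
    (hneg : Matrix.PosDef ((-I).map ((↑) : ℤ → ℝ)))
    (v : V) (S : Finset V)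
    -- `S` is the vertex set of a connected component `Γᵢ` of `Γ ∖ v`
    (hvS : v ∉ S)
    (hconn : (G.induce (↑S : Set V)).Connected)
    (hclosed : ∀ s ∈ S, ∀ x : V, G.Adj s x → x = v ∨ x ∈ S)
    -- `vᵢ` is the unique vertex of `Γᵢ` adjacent to `v`
    (vi : V) (hvi : vi ∈ S) (hadj : G.Adj v vi)
    (w : V) (hw : w ∈ S) :
    -(((-I).det : ℚ)) * ((I.map ((↑) : ℤ → ℚ))⁻¹ v w)
      = (-((((Matrix.of fun i j : {x : V // x ∈ S} => -I i.1 j.1).det : ℤ) : ℚ)) *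
          (((Matrix.of fun i j : {x : V // x ∈ S} => ((I i.1 j.1 : ℤ) : ℚ)))⁻¹
            ⟨vi, hvi⟩ ⟨w, hw⟩))
        * ((gdet I (Finset.univ \ insert v S) : ℤ) : ℚ) := by
  classical
  -- notation
  set T : Finset V := Finset.univ \ insert v S with hT
  have hmemT : ∀ x : V, x ∈ T ↔ (x ≠ v ∧ x ∉ S) := by
    intro x
    simp [hT, Finset.mem_sdiff, Finset.mem_insert, not_or]
  set Iq : Matrix V V ℚ := I.map ((↑) : ℤ → ℚ) with hIq
  set Aq : Matrix {x : V // x ∈ S} {x : V // x ∈ S} ℚ :=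
    (Matrix.of fun i j : {x : V // x ∈ S} => ((I i.1 j.1 : ℤ) : ℚ)) with hAq
  set Dq : Matrix {x : V // x ∈ T} {x : V // x ∈ T} ℚ :=
    (Matrix.of fun i j : {x : V // x ∈ T} => ((I i.1 j.1 : ℤ) : ℚ)) with hDq
  -- symmetry of I
  have hIsymm : ∀ u u' : V, I u u' = I u' u := by
    intro u u'
    rcases eq_or_ne u u' with rfl | h
    · rfl
    · rw [hoff u u' h, hoff u' u h.symm]
      simp [SimpleGraph.adj_comm]
  -- zero entries
  have hIzero : ∀ s ∈ S, ∀ u : V, u ≠ v → u ∉ S → I s u = 0 := by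
    intro s hs u huv huS
    have hsu : s ≠ u := fun h => huS (h ▸ hs)
    rw [hoff s u hsu, if_neg]
    intro hGadj
    rcases hclosed s hs u hGadj with h | h
    · exact huv h
    · exact huS h
  -- the column of `v` restricted to `S`
  have hIv : ∀ s ∈ S, I s v = if s = vi then 1 else 0 := by
    intro s hs
    have hsv : s ≠ v := fun h => hvS (h ▸ hs)
    rw [hoff s v hsv]
    by_cases h : G.Adj s v
    · rw [if_pos h, if_pos (unique_nbr' G hG v S hvS hconn vi hvi hadj s hs h.symm)]
    · rw [if_neg h, if_neg]
      intro hsvi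
      exact h (hsvi ▸ hadj.symm)
  -- the three-way splitting of V
  let f : Unit ⊕ ({x : V // x ∈ S} ⊕ {x : V // x ∈ T}) → V :=
    Sum.elim (fun _ => v) (Sum.elim Subtype.val Subtype.val)
  have hfS : ∀ x : {x : V // x ∈ S}, (x : V) ≠ v := fun x h => hvS (h ▸ x.2)
  have hfT : ∀ x : {x : V // x ∈ T}, (x : V) ≠ v := fun x => ((hmemT x.1).mp x.2).1
  have hbij : Function.Bijective f := by
    constructor
    · rintro (a | a | a) (b | b | b) h <;>
        simp only [f, Sum.elim_inl, Sum.elim_inr] at h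
      · rfl
      · exact absurd h.symm (hfS _)
      · exact absurd h.symm (hfT _)
      · exact absurd h (hfS _)
      · exact congrArg _ (congrArg _ (Subtype.ext h))
      · exact absurd ((hmemT b.1).mp b.2).2 (not_not.mpr (h ▸ a.2))
      · exact absurd h (hfT _)
      · exact absurd ((hmemT a.1).mp a.2).2 (not_not.mpr (h ▸ b.2))
      · exact congrArg _ (congrArg _ (Subtype.ext h))
    · intro u
      by_cases h1 : u = v
      · exact ⟨Sum.inl (), h1.symm⟩
      · by_cases h2 : u ∈ S
        · exact ⟨Sum.inr (Sum.inl ⟨u, h2⟩), rfl⟩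
        · exact ⟨Sum.inr (Sum.inr ⟨u, (hmemT u).mpr ⟨h1, h2⟩⟩), rfl⟩
  let e : Unit ⊕ ({x : V // x ∈ S} ⊕ {x : V // x ∈ T}) ≃ V := Equiv.ofBijective f hbij
  have hcard : Fintype.card V = 1 + (Fintype.card {x : V // x ∈ S} + Fintype.card {x : V // x ∈ T}) := by
    rw [← Fintype.card_congr e]
    simp
  -- determinant of Iq nonzero
  have hdetneg : ((-I).det : ℝ) ≠ 0 := by
    have h1 : ((-I).map ((↑) : ℤ → ℝ)).det = ((-I).det : ℝ) := by
      rw [show ((-I).map ((↑) : ℤ → ℝ)) = (Int.castRingHom ℝ).mapMatrix (-I) from rfl,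
        ← RingHom.map_det]
      rfl
    have := hneg.det_pos
    rw [h1] at this
    exact ne_of_gt this
  have hdetI : I.det ≠ 0 := by
    intro h
    apply hdetneg
    rw [Matrix.det_neg, h]
    simp
  have hdetIq : Iq.det ≠ 0 := by
    have : Iq.det = (I.det : ℚ) := by
      rw [show Iq = (Int.castRingHom ℚ).mapMatrix I from rfl, ← RingHom.map_det]
      rfl
    rw [this]
    exact_mod_cast hdetI
  -- determinant of Aq nonzero
  have hdetAq : Aq.det ≠ 0 := by
    have hpd : (((-I).map ((↑) : ℤ → ℝ)).submatrix
        (Subtype.val : {x : V // x ∈ S} → V) Subtype.val).PosDef :=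
      posDef_submatrix' hneg _ Subtype.val_injective
    have h2 : (((-I).map ((↑) : ℤ → ℝ)).submatrix
        (Subtype.val : {x : V // x ∈ S} → V) Subtype.val).det ≠ 0 := ne_of_gt hpd.det_pos
    intro h
    apply h2
    have hAZ : ((-I).map ((↑) : ℤ → ℝ)).submatrix
        (Subtype.val : {x : V // x ∈ S} → V) Subtype.val
        = (Int.castRingHom ℝ).mapMatrix (Matrix.of fun i j : {x : V // x ∈ S} => -I i.1 j.1) := rfl
    rw [hAZ, ← RingHom.map_det]
    have hAq2 : Aq = (Int.castRingHom ℚ).mapMatrix (Matrix.of fun i j : {x : V // x ∈ S} => I i.1 j.1) := rfl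
    rw [hAq2, ← RingHom.map_det] at h
    have hz' : (((Matrix.of fun i j : {x : V // x ∈ S} => I i.1 j.1).det : ℤ) : ℚ) = 0 := h
    have hz : (Matrix.of fun i j : {x : V // x ∈ S} => I i.1 j.1).det = 0 := by exact_mod_cast hz'
    have : (Matrix.of fun i j : {x : V // x ∈ S} => -I i.1 j.1)
        = -(Matrix.of fun i j : {x : V // x ∈ S} => I i.1 j.1) := by ext i j; simp
    rw [this, Matrix.det_neg, hz, mul_zero]
    simp
  -- N = Iq with row v replaced by the standard basis vector at v
  set N : Matrix V V ℚ := Iq.updateRow v (Pi.single v 1) with hN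
  have hNdet : N.det = Aq.det * Dq.det := by
    rw [← Matrix.det_submatrix_equiv_self e N]
    have hblock : N.submatrix e e = Matrix.fromBlocks (1 : Matrix Unit Unit ℚ)
        0 (Matrix.of fun i (_ : Unit) => Iq (Sum.elim Subtype.val Subtype.val i) v)
        (Matrix.fromBlocks Aq 0 0 Dq) := by
      ext i j
      rcases i with i | i | i <;> rcases j with j | j | j
      · show N v v = (1 : Matrix Unit Unit ℚ) i j
        rw [hN, Matrix.updateRow_self, Matrix.one_apply_eq]
        simp
      · show N v j.1 = 0
        rw [hN, Matrix.updateRow_self]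
        exact Pi.single_eq_of_ne (hfS j) 1
      · show N v j.1 = 0
        rw [hN, Matrix.updateRow_self]
        exact Pi.single_eq_of_ne (hfT j) 1
      · show N i.1 v = Iq i.1 v
        rw [hN, Matrix.updateRow_ne (hfS i)]
      · show N i.1 j.1 = Aq i j
        rw [hN, Matrix.updateRow_ne (hfS i)]
        rfl
      · show N i.1 j.1 = 0
        rw [hN, Matrix.updateRow_ne (hfS i)]
        show ((I i.1 j.1 : ℤ) : ℚ) = 0
        rw [hIzero i.1 i.2 j.1 ((hmemT j.1).mp j.2).1 ((hmemT j.1).mp j.2).2]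
        simp
      · show N i.1 v = Iq i.1 v
        rw [hN, Matrix.updateRow_ne (hfT i)]
      · show N i.1 j.1 = 0
        rw [hN, Matrix.updateRow_ne (hfT i)]
        show ((I i.1 j.1 : ℤ) : ℚ) = 0
        rw [hIsymm i.1 j.1, hIzero j.1 j.2 i.1 ((hmemT i.1).mp i.2).1 ((hmemT i.1).mp i.2).2]
        simp
      · show N i.1 j.1 = Dq i j
        rw [hN, Matrix.updateRow_ne (hfT i)]
        rfl
    rw [hblock, Matrix.det_fromBlocks_zero₁₂, Matrix.det_fromBlocks_zero₂₁]
    simp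
  -- the diagonal entry of the inverse at v
  have hIvv : Iq⁻¹ v v = (Iq.det)⁻¹ * (Aq.det * Dq.det) := by
    rw [Matrix.inv_def]
    simp only [Matrix.smul_apply, smul_eq_mul, Ring.inverse_eq_inv']
    rw [Matrix.adjugate_apply, ← hN, hNdet]
  have hIu : IsUnit Iq.det := isUnit_iff_ne_zero.mpr hdetIq
  have hAu : IsUnit Aq.det := isUnit_iff_ne_zero.mpr hdetAq
  -- symmetry
  have hIqsymm : Iqᵀ = Iq := by
    ext i j
    show ((I j i : ℤ) : ℚ) = ((I i j : ℤ) : ℚ)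
    rw [hIsymm j i]
  have hIqinvsymm : Iq⁻¹ᵀ = Iq⁻¹ := by rw [Matrix.transpose_nonsing_inv, hIqsymm]
  have hAqsymm : Aqᵀ = Aq := by
    ext i j
    show ((I j.1 i.1 : ℤ) : ℚ) = ((I i.1 j.1 : ℤ) : ℚ)
    rw [hIsymm j.1 i.1]
  have hAqinvsymm : Aq⁻¹ᵀ = Aq⁻¹ := by rw [Matrix.transpose_nonsing_inv, hAqsymm]
  -- the key vector identity
  set c : ℚ := Iq⁻¹ v v with hc
  set y : {x : V // x ∈ S} → ℚ := fun u => Iq⁻¹ u.1 v with hy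
  have hAy : Aq *ᵥ y = Pi.single ⟨vi, hvi⟩ (-c) := by
    funext s
    have h1 : (Iq * Iq⁻¹) s.1 v = 0 := by
      rw [Matrix.mul_nonsing_inv _ hIu]
      exact Matrix.one_apply_ne (hfS s)
    rw [Matrix.mul_apply] at h1
    have h2 : ∑ u : V, Iq s.1 u * Iq⁻¹ u v
        = Iq s.1 v * Iq⁻¹ v v
          + ((∑ u : {x : V // x ∈ S}, Iq s.1 u.1 * Iq⁻¹ u.1 v)
            + (∑ t : {x : V // x ∈ T}, Iq s.1 t.1 * Iq⁻¹ t.1 v)) := by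
      rw [← Equiv.sum_comp e (fun u => Iq s.1 u * Iq⁻¹ u v), Fintype.sum_sum_type,
        Fintype.sum_sum_type, Fintype.sum_unique]
      rfl
    rw [h2] at h1
    have hz : ∑ t : {x : V // x ∈ T}, Iq s.1 t.1 * Iq⁻¹ t.1 v = 0 := by
      refine Finset.sum_eq_zero fun t _ => ?_
      have : Iq s.1 t.1 = 0 := by
        show ((I s.1 t.1 : ℤ) : ℚ) = 0
        rw [hIzero s.1 s.2 t.1 ((hmemT t.1).mp t.2).1 ((hmemT t.1).mp t.2).2]
        simp
      rw [this, zero_mul]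
    rw [hz, add_zero] at h1
    have hAs : (Aq *ᵥ y) s = ∑ u : {x : V // x ∈ S}, Iq s.1 u.1 * Iq⁻¹ u.1 v := rfl
    have hIsv : Iq s.1 v = if s = (⟨vi, hvi⟩ : {x : V // x ∈ S}) then 1 else 0 := by
      show ((I s.1 v : ℤ) : ℚ) = _
      rw [hIv s.1 s.2]
      by_cases h : s.1 = vi
      · rw [if_pos h, if_pos (Subtype.ext h)]
        simp
      · rw [if_neg h, if_neg (fun hh => h (congrArg Subtype.val hh))]
        simp
    rw [hAs]
    have h3 : ∑ u : {x : V // x ∈ S}, Iq s.1 u.1 * Iq⁻¹ u.1 v = -(Iq s.1 v * Iq⁻¹ v v) := by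
      linarith [h1]
    rw [h3, hIsv]
    by_cases h : s = (⟨vi, hvi⟩ : {x : V // x ∈ S})
    · rw [if_pos h, h, Pi.single_eq_same]
      ring_nf
      rw [hc]
    · rw [if_neg h, Pi.single_eq_of_ne h]
      ring
  have hy2 : y = Aq⁻¹ *ᵥ Pi.single ⟨vi, hvi⟩ (-c) := by
    rw [← hAy, Matrix.mulVec_mulVec, Matrix.nonsing_inv_mul _ hAu, Matrix.one_mulVec]
  have hyw : Iq⁻¹ v w = Aq⁻¹ ⟨vi, hvi⟩ ⟨w, hw⟩ * (-c) := by
    have h1 : Iq⁻¹ v w = Iq⁻¹ w v := by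
      conv_lhs => rw [← hIqinvsymm]
      rfl
    have h2 : Iq⁻¹ w v = y ⟨w, hw⟩ := rfl
    have h3 : Aq⁻¹ ⟨w, hw⟩ ⟨vi, hvi⟩ = Aq⁻¹ ⟨vi, hvi⟩ ⟨w, hw⟩ := by
      conv_lhs => rw [← hAqinvsymm]
      rfl
    rw [h1, h2, hy2, Matrix.mulVec_single]
    show Aq⁻¹ ⟨w, hw⟩ ⟨vi, hvi⟩ * -c = _
    rw [h3]
  -- determinant casts
  have hIqdet : Iq.det = (I.det : ℚ) := by
    rw [show Iq = (Int.castRingHom ℚ).mapMatrix I from rfl, ← RingHom.map_det]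
    rfl
  have hdetnegI : ((-I).det : ℚ) = (-1) ^ (Fintype.card V) * Iq.det := by
    rw [Matrix.det_neg, hIqdet]
    push_cast
    ring
  have hAneg : (((Matrix.of fun i j : {x : V // x ∈ S} => -I i.1 j.1).det : ℤ) : ℚ)
      = (-1) ^ (Fintype.card {x : V // x ∈ S}) * Aq.det := by
    have h1 : (Matrix.of fun i j : {x : V // x ∈ S} => -I i.1 j.1)
        = -(Matrix.of fun i j : {x : V // x ∈ S} => I i.1 j.1) := rfl
    have h2 : Aq.det = ((Matrix.of fun i j : {x : V // x ∈ S} => I i.1 j.1).det : ℚ) := by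
      rw [show Aq = (Int.castRingHom ℚ).mapMatrix (Matrix.of fun i j : {x : V // x ∈ S} => I i.1 j.1) from rfl,
        ← RingHom.map_det]
      rfl
    rw [h1, Matrix.det_neg, h2]
    push_cast
    ring
  have hDneg : ((gdet I T : ℤ) : ℚ) = (-1) ^ (Fintype.card {x : V // x ∈ T}) * Dq.det := by
    have h1 : gdet I T = (-(Matrix.of fun i j : {x : V // x ∈ T} => I i.1 j.1)).det := rfl
    have h2 : Dq.det = ((Matrix.of fun i j : {x : V // x ∈ T} => I i.1 j.1).det : ℚ) := by
      rw [show Dq = (Int.castRingHom ℚ).mapMatrix (Matrix.of fun i j : {x : V // x ∈ T} => I i.1 j.1) from rfl,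
        ← RingHom.map_det]
      rfl
    rw [h1, Matrix.det_neg, h2]
    push_cast
    ring
  -- final computation
  rw [hdetnegI, hyw, hAneg, hDneg, hIvv, hcard]
  field_simp
  ring
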